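/- For every n ≥ 1 and all positive reals ε₁ ≤ … ≤ εₙ, with r defined by r₁ = ε₁ and r_{k+1} = min{ε_{k+1}, (Σ_{i=1}^k rᵢ² + 8)/(Σ_{i=1}^k rᵢ)}, it holds that (Σᵢ rᵢ² + 8)/(4 (Σᵢ rᵢ)²) ≤ 443 · max_{0 ≤ i ≤ n} 1/((Σ_{j=1}^i ε_j)² + n − i). -/

import Mathlib

set_option maxHeartbeats 3200000 in
/-- Theorem opt, upper vs lower bound: For every `n ≥ 1` and nondecreasing
positive `ε` (0-indexed, length `n`), with the ADPM weights `r` (0-indexed: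
`r 0 = ε 0`, `r (k+1) = min (ε (k+1)) ((∑_{i<k+1} r i² + 8)/(∑_{i<k+1} r i))`),
`((∑_{i<n} r i ^ 2) + 8) / (4 (∑_{i<n} r i)²) ≤ 443 * H(ε)` where
`H(ε) = max_{0 ≤ i ≤ n} 1 / ((∑_{j<i} ε j)² + (n - i))`. -/
theorem adpm_optimality (n : ℕ) (hn : 1 ≤ n) (ε r : ℕ → ℝ)
    (hpos : ∀ i < n, 0 < ε i)
    (hmono : ∀ i j : ℕ, i ≤ j → j < n → ε i ≤ ε j)
    (hr0 : r 0 = ε 0)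
    (hrec : ∀ k : ℕ, k + 1 < n → r (k + 1) = min (ε (k + 1))
      (((∑ i ∈ Finset.range (k + 1), (r i) ^ 2) + 8) / (∑ i ∈ Finset.range (k + 1), r i))) :
    ((∑ i ∈ Finset.range n, (r i) ^ 2) + 8) / (4 * (∑ i ∈ Finset.range n, r i) ^ 2)
      ≤ 443 * (Finset.range (n + 1)).sup' Finset.nonempty_range_add_one
          (fun i => 1 / ((∑ j ∈ Finset.range i, ε j) ^ 2 + ((n - i : ℕ) : ℝ))) := by
  classical
  set E : ℕ → ℝ := fun j => ∑ i ∈ Finset.range j, ε i with hEdef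
  set Qe : ℕ → ℝ := fun j => (∑ i ∈ Finset.range j, ε i ^ 2) + 8 with hQedef
  -- basic positivity of partial sums of ε
  have hEmono : ∀ i j : ℕ, i ≤ j → j ≤ n → E i ≤ E j := by
    intro i j hij hjn
    apply Finset.sum_le_sum_of_subset_of_nonneg (Finset.range_subset_range.mpr hij)
    intro k hk _
    exact (hpos k (by have := Finset.mem_range.mp hk; omega)).le
  have hEpos : ∀ j : ℕ, 1 ≤ j → j ≤ n → 0 < E j := by
    intro j h1 h2
    have : E 1 ≤ E j := hEmono 1 j h1 h2
    have h1' : E 1 = ε 0 := by simp [hEdef]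
    have := hpos 0 hn
    linarith
  have hEnonneg : ∀ j : ℕ, j ≤ n → 0 ≤ E j := by
    intro j hj
    rcases Nat.eq_zero_or_pos j with h | h
    · simp [hEdef, h]
    · exact (hEpos j h hj).le
  have hQepos : ∀ j : ℕ, 0 < Qe j → True := fun _ _ => trivial
  -- the switching index m
  have hPex : ∃ k, n ≤ k ∨ r k ≠ ε k := ⟨n, Or.inl le_rfl⟩
  set m := Nat.find hPex with hmdef
  have hm_le : m ≤ n := Nat.find_min' hPex (Or.inl le_rfl)
  have hrEq : ∀ i, i < m → r i = ε i := by
    intro i hi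
    have := Nat.find_min hPex hi
    push_neg at this
    exact this.2
  have hi_lt : ∀ i, i < m → i < n := by
    intro i hi
    have := Nat.find_min hPex hi
    push_neg at this
    omega
  have hm_pos : 1 ≤ m := by
    rcases Nat.eq_zero_or_pos m with h | h
    · exfalso
      have := Nat.find_spec hPex
      rw [← hmdef, h] at this
      rcases this with h' | h'
      · omega
      · exact h' hr0
    · exact h
  -- sums of r up to j ≤ m agree with sums of ε
  have hsum_eq : ∀ j, j ≤ m → (∑ i ∈ Finset.range j, r i) = E j := by
    intro j hj
    apply Finset.sum_congr rfl
    intro i hi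
    exact hrEq i (by have := Finset.mem_range.mp hi; omega)
  have hsumsq_eq : ∀ j, j ≤ m → (∑ i ∈ Finset.range j, (r i) ^ 2) + 8 = Qe j := by
    intro j hj
    have : (∑ i ∈ Finset.range j, (r i) ^ 2) = ∑ i ∈ Finset.range j, ε i ^ 2 := by
      apply Finset.sum_congr rfl
      intro i hi
      rw [hrEq i (by have := Finset.mem_range.mp hi; omega)]
    rw [this]
  -- branch-1 condition for 1 ≤ k < m
  have hbranch : ∀ k, 1 ≤ k → k < m → ε k * E k ≤ Qe k := by
    intro k h1 h2
    obtain ⟨k0, rfl⟩ : ∃ k0, k = k0 + 1 := ⟨k - 1, by omega⟩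
    have hkn : k0 + 1 < n := hi_lt _ h2
    have hre := hrec k0 hkn
    rw [hsum_eq _ (by omega), hsumsq_eq _ (by omega), hrEq _ h2] at hre
    have hmin : ε (k0 + 1) ≤ Qe (k0 + 1) / E (k0 + 1) := by
      by_contra hcon
      push_neg at hcon
      have : min (ε (k0 + 1)) (Qe (k0 + 1) / E (k0 + 1)) = Qe (k0 + 1) / E (k0 + 1) :=
        min_eq_right hcon.le
      rw [this] at hre
      exact absurd hre (by linarith)
    have hE : 0 < E (k0 + 1) := hEpos _ (by omega) (by omega)
    exact (le_div_iff₀ hE).mp hmin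
  -- the ratio Qe j / E j is nonincreasing for 1 ≤ j ≤ m
  have hrat : ∀ j k : ℕ, 1 ≤ j → j ≤ k → k ≤ m → Qe k / E k ≤ Qe j / E j := by
    intro j k h1 hjk hkm
    induction k, hjk using Nat.le_induction with
    | base => exact le_rfl
    | succ k hk ih =>
      have hkm' : k ≤ m := by omega
      have ih' := ih hkm'
      have hstep : Qe (k + 1) / E (k + 1) ≤ Qe k / E k := by
        have hb : ε k * E k ≤ Qe k := hbranch k (by omega) (by omega)
        have hEk : 0 < E k := hEpos k (by omega) (by omega)
        have hEk1 : 0 < E (k + 1) := hEpos (k + 1) (by omega) (by omega)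
        have hQ1 : Qe (k + 1) = Qe k + ε k ^ 2 := by
          simp [hQedef, Finset.sum_range_succ]; ring
        have hE1 : E (k + 1) = E k + ε k := by
          simp [hEdef, Finset.sum_range_succ]
        rw [div_le_div_iff₀ hEk1 hEk, hQ1, hE1]
        have hεk : 0 < ε k := hpos k (by omega)
        nlinarith
      exact hstep.trans ih'
  -- the constant c
  set c : ℝ := Qe m / E m with hcdef
  have hEm : 0 < E m := hEpos m hm_pos hm_le
  have hQem : (8:ℝ) ≤ Qe m := by
    have : (0:ℝ) ≤ ∑ i ∈ Finset.range m, ε i ^ 2 :=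
      Finset.sum_nonneg fun i _ => sq_nonneg _
    simp only [hQedef]; linarith
  have hc_pos : 0 < c := div_pos (by linarith) hEm
  have hcEm : c * E m = Qe m := div_mul_cancel₀ _ hEm.ne'
  have hcE : ∀ i, 1 ≤ i → i ≤ m → c * E i ≤ Qe i := by
    intro i h1 h2
    have h := hrat i m h1 h2 le_rfl
    have hEi : 0 < E i := hEpos i h1 (by omega)
    calc c * E i ≤ (Qe i / E i) * E i := by
          exact mul_le_mul_of_nonneg_right h hEi.le
      _ = Qe i := div_mul_cancel₀ _ hEi.ne'
  -- Qe i ≤ ε (i-1) * E i + 8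
  have hQe_le : ∀ i, 1 ≤ i → i ≤ n → Qe i ≤ ε (i - 1) * E i + 8 := by
    intro i h1 h2
    have hsum : (∑ j ∈ Finset.range i, ε j ^ 2) ≤ ∑ j ∈ Finset.range i, ε (i-1) * ε j := by
      apply Finset.sum_le_sum
      intro j hj
      have hj' := Finset.mem_range.mp hj
      have hεj : 0 < ε j := hpos j (by omega)
      have : ε j ≤ ε (i - 1) := hmono j (i-1) (by omega) (by omega)
      nlinarith
    have : (∑ j ∈ Finset.range i, ε (i-1) * ε j) = ε (i-1) * E i := by
      rw [← Finset.mul_sum]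
    simp only [hQedef]
    rw [this] at hsum
    linarith
  -- structure of r above m
  have hKm : (∑ i ∈ Finset.range m, r i) = E m + ((m:ℝ) - m) * c ∧
      (∑ i ∈ Finset.range m, (r i) ^ 2) + 8 = c * (E m + ((m:ℝ) - m) * c) := by
    constructor
    · rw [hsum_eq m le_rfl]; ring
    · rw [hsumsq_eq m le_rfl]; rw [← hcEm]; ring
  have hεm_gt : m < n → c < ε m := by
    intro hmn
    have hspec := Nat.find_spec hPex
    rw [← hmdef] at hspec
    have hne : r m ≠ ε m := hspec.resolve_left (by omega)
    obtain ⟨k0, hk0⟩ : ∃ k0, m = k0 + 1 := ⟨m - 1, by omega⟩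
    have hre := hrec k0 (by omega)
    rw [← hk0] at hre
    rw [hsum_eq m le_rfl, hsumsq_eq m le_rfl] at hre
    rw [← hcdef] at hre
    by_contra hcon
    push_neg at hcon
    exact hne (by rw [hre]; exact min_eq_left hcon)
  have hstruct : ∀ j, m ≤ j → j ≤ n →
      (∑ i ∈ Finset.range j, r i) = E m + ((j:ℝ) - m) * c ∧
      (∑ i ∈ Finset.range j, (r i) ^ 2) + 8 = c * (E m + ((j:ℝ) - m) * c) := by
    intro j hmj
    induction j, hmj using Nat.le_induction with
    | base => intro _; exact hKm
    | succ j hj ih =>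
      intro hjn
      have hjn' : j < n := by omega
      have ih' := ih (by omega)
      have hSj : 0 < E m + ((j:ℝ) - m) * c := by
        have : (0:ℝ) ≤ ((j:ℝ) - m) * c := by
          apply mul_nonneg _ hc_pos.le
          have : (m:ℝ) ≤ j := by exact_mod_cast hj
          linarith
        linarith
      have hrj : r j = c := by
        rcases Nat.eq_or_lt_of_le hj with he | hlt
        · -- j = m
          have hne : r m ≠ ε m := by
            have hspec := Nat.find_spec hPex
            rw [← hmdef] at hspec
            exact hspec.resolve_left (by omega)
          obtain ⟨k0, hk0⟩ : ∃ k0, m = k0 + 1 := ⟨m - 1, by omega⟩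
          have hre := hrec k0 (by omega)
          rw [← hk0, hsum_eq m le_rfl, hsumsq_eq m le_rfl, ← hcdef] at hre
          have : r m = c := by
            rcases le_or_gt (ε m) c with h | h
            · exact absurd (by rw [hre]; exact min_eq_left h) hne
            · rw [hre]; exact min_eq_right h.le
          rw [← he]; exact this
        · -- m < j
          obtain ⟨k0, hk0⟩ : ∃ k0, j = k0 + 1 := ⟨j - 1, by omega⟩
          have hre := hrec k0 (by omega)
          rw [← hk0, ih'.1, ih'.2] at hre
          have hdiv : c * (E m + ((j:ℝ) - m) * c) / (E m + ((j:ℝ) - m) * c) = c :=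
            mul_div_cancel_right₀ _ hSj.ne'
          rw [hdiv] at hre
          have hεj : c < ε j := lt_of_lt_of_le (hεm_gt (by omega)) (hmono m j hj hjn')
          rw [hre]; exact min_eq_right hεj.le
      constructor
      · rw [Finset.sum_range_succ, hrj]; push_cast; linear_combination ih'.1
      · rw [Finset.sum_range_succ, hrj]; push_cast; linear_combination ih'.2
  obtain ⟨hSn, hQn⟩ := hstruct n hm_le le_rfl
  set Sn : ℝ := E m + ((n:ℝ) - m) * c with hSndef
  have hSn_pos : 0 < Sn := by
    have : (0:ℝ) ≤ ((n:ℝ) - m) * c := by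
      apply mul_nonneg _ hc_pos.le
      have : (m:ℝ) ≤ n := by exact_mod_cast hm_le
      linarith
    simp only [hSndef]; linarith
  -- key claim: choice of index i
  have hclaim : ∃ i, i ≤ m ∧
      c * (E i ^ 2 + ((n:ℝ) - i)) ≤ 18 * E m + ((n:ℝ) - m) * c := by
    have hmn : (m:ℝ) ≤ (n:ℝ) := by exact_mod_cast hm_le
    rcases lt_or_ge (ε (m-1) * E m) 8 with hA | hA
    · -- case A : take i = m
      refine ⟨m, le_rfl, ?_⟩
      have h1 : Qe m ≤ ε (m-1) * E m + 8 := hQe_le m hm_pos hm_le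
      have h2 : c * E m < 16 := by rw [hcEm]; linarith
      have h3 : c * E m ^ 2 ≤ 16 * E m := by nlinarith
      have h4 : c * (E m ^ 2 + ((n:ℝ) - m)) = c * E m ^ 2 + ((n:ℝ) - m) * c := by ring
      rw [h4]; linarith
    rcases le_or_gt 8 (ε 0 ^ 2) with hB | hB
    · -- case B : take i = 0
      refine ⟨0, Nat.zero_le _, ?_⟩
      have hE1 : E 1 = ε 0 := by simp [hEdef]
      have hQe1 : Qe 1 = ε 0 ^ 2 + 8 := by simp [hQedef]
      have hε0 : 0 < ε 0 := hpos 0 hn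
      have hcε : c * ε 0 ≤ 2 * ε 0 ^ 2 := by
        have h := hcE 1 le_rfl hm_pos
        rw [hE1, hQe1] at h; linarith
      have hc2 : c ≤ 2 * ε 0 := by nlinarith
      have hmE : (m:ℝ) * ε 0 ≤ E m := by
        have : (∑ _j ∈ Finset.range m, ε 0) ≤ ∑ j ∈ Finset.range m, ε j := by
          apply Finset.sum_le_sum
          intro j hj
          exact hmono 0 j (Nat.zero_le _) (hi_lt j (Finset.mem_range.mp hj))
        simpa [Finset.sum_const, Finset.card_range, mul_comm] using this
      have hE0 : E 0 = 0 := by simp [hEdef]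
      rw [hE0]
      have hexp : c * ((0:ℝ) ^ 2 + ((n:ℝ) - (0:ℕ))) = c * (m:ℝ) + ((n:ℝ) - m) * c := by
        push_cast; ring
      rw [hexp]
      nlinarith
    · -- case C : intermediate index
      have hm2 : 2 ≤ m := by
        rcases Nat.lt_or_ge m 2 with h | h
        · exfalso
          have hm1 : m = 1 := by omega
          have hE1 : E m = ε 0 := by rw [hm1]; simp [hEdef]
          have hε : ε (m-1) = ε 0 := by rw [hm1]
          rw [hE1, hε] at hA
          nlinarith
        · exact h
      have hFm : 8 ≤ ε (m-1) * E ((m-1)+1) := by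
        have : (m-1)+1 = m := by omega
        rw [this]; exact hA
      have hFex : ∃ t, 8 ≤ ε t * E (t+1) := ⟨m-1, hFm⟩
      set t := Nat.find hFex with htdef
      have htspec : 8 ≤ ε t * E (t+1) := Nat.find_spec hFex
      have ht_le : t ≤ m - 1 := Nat.find_min' hFex hFm
      have ht1 : 1 ≤ t := by
        rcases Nat.eq_zero_or_pos t with h | h
        · exfalso
          have := htspec
          rw [h] at this
          have hE1 : E (0+1) = ε 0 := by simp [hEdef]
          rw [hE1] at this
          nlinarith
        · exact h
      have htprev : ε (t-1) * E ((t-1)+1) < 8 := by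
        have := Nat.find_min hFex (show t - 1 < t by omega)
        push_neg at this
        exact this
      have htm : t + 1 ≤ m := by omega
      have htn : t + 1 ≤ n := by omega
      have hEt : 0 < E t := hEpos t ht1 (by omega)
      have hEt1 : 0 < E (t+1) := hEpos (t+1) (by omega) htn
      have htEt : ε (t-1) * E t < 8 := by
        have : (t-1)+1 = t := by omega
        rw [this] at htprev; exact htprev
      have hb1 : c * E t ≤ 16 := by
        have h1 := hcE t ht1 (by omega)
        have h2 := hQe_le t ht1 (by omega)
        linarith
      have hb2 : c ≤ 2 * ε t := by
        have h1 := hcE (t+1) (by omega) htm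
        have h2 := hQe_le (t+1) (by omega) htn
        have h3 : (t+1) - 1 = t := by omega
        rw [h3] at h2
        have h4 : c * E (t+1) ≤ 2 * (ε t * E (t+1)) := by linarith
        nlinarith
      have hεt : 0 < ε t := hpos t (by omega)
      have hb3 : ((m:ℝ) - t) * ε t ≤ E m - E t := by
        have hsub : (∑ i ∈ Finset.Ico t m, ε i) = E m - E t := by
          simp only [hEdef]
          rw [Finset.sum_Ico_eq_sub _ (by omega : t ≤ m)]
        have hge : (∑ _i ∈ Finset.Ico t m, ε t) ≤ ∑ i ∈ Finset.Ico t m, ε i := by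
          apply Finset.sum_le_sum
          intro i hi
          have hi' := Finset.mem_Ico.mp hi
          exact hmono t i hi'.1 (by omega)
        rw [hsub] at hge
        have hcard : (∑ _i ∈ Finset.Ico t m, ε t) = ((m - t : ℕ):ℝ) * ε t := by
          simp [Finset.sum_const, Nat.card_Ico]
        rw [hcard] at hge
        have : ((m - t : ℕ):ℝ) = (m:ℝ) - t := by
          have : t ≤ m := by omega
          push_cast [this]; ring
        rw [this] at hge
        exact hge
      refine ⟨t, by omega, ?_⟩
      have hEtm : E t ≤ E m := hEmono t m (by omega) hm_le
      have h5 : c * E t ^ 2 ≤ 16 * E m := by nlinarith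
      have h6 : c * ((m:ℝ) - t) ≤ 2 * (E m - E t) := by
        have hmt : (0:ℝ) ≤ (m:ℝ) - t := by
          have : (t:ℝ) ≤ m := by exact_mod_cast (by omega : t ≤ m)
          linarith
        nlinarith
      have hexp : c * (E t ^ 2 + ((n:ℝ) - t)) =
          c * E t ^ 2 + c * ((m:ℝ) - t) + ((n:ℝ) - m) * c := by ring
      rw [hexp]
      linarith
  -- conclusion
  obtain ⟨i, him, hkey⟩ := hclaim
  have hin : i ≤ n := le_trans him hm_le
  have hcast : ((n - i : ℕ) : ℝ) = (n:ℝ) - i := by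
    push_cast [hin]; ring
  have hden_pos : 0 < E i ^ 2 + ((n:ℝ) - i) := by
    rcases lt_or_eq_of_le hin with h | h
    · have h1 : (i:ℝ) + 1 ≤ n := by exact_mod_cast h
      nlinarith [sq_nonneg (E i)]
    · have hi1 : 1 ≤ i := by omega
      have := hEpos i hi1 hin
      have h2 : (n:ℝ) - i = 0 := by rw [h]; ring
      nlinarith
  have hfle : (1:ℝ) / (E i ^ 2 + ((n:ℝ) - i)) ≤
      (Finset.range (n + 1)).sup' Finset.nonempty_range_add_one
        (fun i => 1 / ((∑ j ∈ Finset.range i, ε j) ^ 2 + ((n - i : ℕ) : ℝ))) := by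
    have h := Finset.le_sup'
      (fun i => 1 / ((∑ j ∈ Finset.range i, ε j) ^ 2 + ((n - i : ℕ) : ℝ)))
      (Finset.mem_range.mpr (by omega : i < n + 1))
    simpa [hcast, hEdef, -Finset.le_sup'_iff] using h
  have h18 : c * (E i ^ 2 + ((n:ℝ) - i)) ≤ 18 * Sn := by
    have hnm : (0:ℝ) ≤ ((n:ℝ) - m) * c := by
      apply mul_nonneg _ hc_pos.le
      have : (m:ℝ) ≤ n := by exact_mod_cast hm_le
      linarith
    simp only [hSndef]
    linarith
  rw [hQn, hSn]
  have hLHS : c * Sn / (4 * Sn ^ 2) = c / (4 * Sn) := by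
    rw [pow_two]
    rw [div_eq_div_iff (by positivity) (by positivity)]
    ring
  rw [hLHS]
  have hstep : c / (4 * Sn) ≤ 443 * (1 / (E i ^ 2 + ((n:ℝ) - i))) := by
    rw [mul_one_div, div_le_div_iff₀ (by positivity) hden_pos]
    nlinarith
  calc c / (4 * Sn) ≤ 443 * (1 / (E i ^ 2 + ((n:ℝ) - i))) := hstep
    _ ≤ _ := by
        apply mul_le_mul_of_nonneg_left hfle (by norm_num)
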